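/- Let N ≥ 1 and let x : Fin N → ℝ be the loss values of a random variable under N equally likely scenarios (each of probability 1/N), and let k be an integer with 1 ≤ k ≤ N. Then the Conditional Value-at-Risk of x at confidence level α = 1 − k/N, defined by the Rockafellar–Uryasev formula CVaR_α(x) = inf over η ∈ ℝ of ( η + (1/k) · Σ_{s} max(x s − η, 0) ) (note 1/(N(1−α)) = 1/k), equals the subset-based expression (1/k) · max over all subsets S̄ of Fin N with |S̄| = k of Σ_{s ∈ S̄} x s. -/
import Mathlib


/-- **Subset-based representation of CVaR** (Fábián 2008).
For `N` equally likely scenarios with losses `x : Fin N → ℝ` and `1 ≤ k ≤ N`,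
the CVaR at level `α = 1 - k/N`, given by the Rockafellar–Uryasev formula
`inf_η (η + (1/k) · Σ_s max (x s - η) 0)` (note `1/(N(1-α)) = 1/k`), equals
`(1/k) · max_{S̄ ⊆ Fin N, |S̄| = k} Σ_{s ∈ S̄} x s`. -/
theorem cvar_eq_subset_based (N k : ℕ) (hN : 1 ≤ N) (x : Fin N → ℝ)
    (hk1 : 1 ≤ k) (hkN : k ≤ N) :
    (⨅ η : ℝ, (η + (1 / (k : ℝ)) * ∑ s, max (x s - η) 0)) =
      (1 / (k : ℝ)) *
        ((Finset.univ : Finset (Fin N)).powersetCard k).sup'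
          (Finset.powersetCard_nonempty.mpr (by simpa using hkN))
          (fun S => ∑ s ∈ S, x s) := by
  have hPne : ((Finset.univ : Finset (Fin N)).powersetCard k).Nonempty :=
    Finset.powersetCard_nonempty.mpr (by simpa using hkN)
  obtain ⟨S, hSP, hS⟩ :=
    ((Finset.univ : Finset (Fin N)).powersetCard k).exists_mem_eq_sup' hPne
      (fun S => ∑ s ∈ S, x s)
  have hScard : S.card = k := (Finset.mem_powersetCard.mp hSP).2
  have hSne : S.Nonempty := Finset.card_pos.mp (by omega)
  obtain ⟨t, htS, htmin⟩ := S.exists_mem_eq_inf' hSne x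
  set η : ℝ := S.inf' hSne x with hη
  have hkpos : (0:ℝ) < k := by exact_mod_cast hk1
  have hmem : ∀ s ∈ S, η ≤ x s := fun s hs => Finset.inf'_le x hs
  have hnotmem : ∀ s : Fin N, s ∉ S → x s ≤ η := by
    intro s hs
    by_contra h
    push_neg at h
    have hsne : s ∉ S.erase t := fun h' => hs (Finset.mem_of_mem_erase h')
    have hcard' : (insert s (S.erase t)).card = k := by
      rw [Finset.card_insert_of_notMem hsne, Finset.card_erase_of_mem htS, hScard]
      omega
    have hS'P : insert s (S.erase t) ∈ (Finset.univ : Finset (Fin N)).powersetCard k :=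
      Finset.mem_powersetCard.mpr ⟨Finset.subset_univ _, hcard'⟩
    have hle : ∑ u ∈ insert s (S.erase t), x u ≤ ∑ u ∈ S, x u := by
      rw [← hS]; exact Finset.le_sup' (fun T => ∑ s ∈ T, x s) hS'P
    rw [Finset.sum_insert hsne, Finset.sum_erase_eq_sub htS] at hle
    have hxt : x t = η := htmin.symm
    linarith
  set c : ℝ := (1 / (k : ℝ)) *
        ((Finset.univ : Finset (Fin N)).powersetCard k).sup'
          hPne (fun S => ∑ s ∈ S, x s) with hc
  have hcS : c = (1 / (k : ℝ)) * ∑ s ∈ S, x s := by rw [hc, hS]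
  have hkinv : (1 / (k : ℝ)) * k = 1 := one_div_mul_cancel hkpos.ne'
  have hlb : ∀ e : ℝ, c ≤ e + (1 / (k : ℝ)) * ∑ s, max (x s - e) 0 := by
    intro e
    have h1 : ∑ s ∈ S, (x s - e) ≤ ∑ s, max (x s - e) 0 := by
      calc ∑ s ∈ S, (x s - e) ≤ ∑ s ∈ S, max (x s - e) 0 :=
            Finset.sum_le_sum (fun s _ => le_max_left _ _)
        _ ≤ ∑ s, max (x s - e) 0 :=
            Finset.sum_le_sum_of_subset_of_nonneg (Finset.subset_univ _)
              (fun s _ _ => le_max_right _ _)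
    rw [Finset.sum_sub_distrib, Finset.sum_const, hScard, nsmul_eq_mul] at h1
    have h2 : (1 / (k : ℝ)) * ((∑ s ∈ S, x s) - k * e)
        ≤ (1 / (k : ℝ)) * ∑ s, max (x s - e) 0 :=
      mul_le_mul_of_nonneg_left h1 (by positivity)
    have h3 : (1 / (k : ℝ)) * ((∑ s ∈ S, x s) - k * e)
        = (1 / (k : ℝ)) * (∑ s ∈ S, x s) - ((1 / (k : ℝ)) * k) * e := by ring
    rw [h3, hkinv] at h2
    rw [hcS]; linarith
  have hval : η + (1 / (k : ℝ)) * ∑ s, max (x s - η) 0 = c := by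
    have h0 : ∑ s ∈ S, max (x s - η) 0 = ∑ s, max (x s - η) 0 :=
      Finset.sum_subset (Finset.subset_univ S)
        (fun s _ hs => max_eq_right (by linarith [hnotmem s hs]))
    have h1 : ∑ s ∈ S, max (x s - η) 0 = ∑ s ∈ S, (x s - η) :=
      Finset.sum_congr rfl (fun s hs => max_eq_left (by linarith [hmem s hs]))
    rw [← h0, h1, Finset.sum_sub_distrib, Finset.sum_const, hScard, nsmul_eq_mul, hcS]
    have : (1 / (k : ℝ)) * ((∑ s ∈ S, x s) - k * η)
        = (1 / (k : ℝ)) * (∑ s ∈ S, x s) - ((1 / (k : ℝ)) * k) * η := by ring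
    rw [this, hkinv]; ring
  refine le_antisymm ?_ (le_ciInf hlb)
  have hbdd : BddBelow (Set.range fun e : ℝ => e + (1 / (k : ℝ)) * ∑ s, max (x s - e) 0) := by
    refine ⟨c, ?_⟩
    rintro y ⟨e, rfl⟩
    exact hlb e
  exact (ciInf_le hbdd η).trans (le_of_eq hval)
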